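/- Fix q ∈ ℂ with 0 < |q| < 1 and set ζ := q/conj(q). On ℓ²(ℤ⁶) with standard orthonormal basis (e_{i,j,k,l,s,t}), let Y₁₂ be the unitary induced by e_{i,j,k,l,s,t} ↦ e_{i,j,k+i+j,l,s,t}, let Z₂₃ be the diagonal unitary e_{i,j,k,l,s,t} ↦ ζ^{−lt} e_{i,j,k,l,s,t}, let X₁₃ be the linear operator on finitely supported vectors X₁₃ e_{i,j,k,l,s,t} = ζ^{−j} q^{s−i+1} e_{i−1,j−1,k,l,s−1,t+1}, and let D be the linear operator on finitely supported vectors D e_{i,j,k,l,s,t} = ζ^{−l} ζ^{−j} q^{s−i+1} e_{i−1,j−1,k−2,l,s−1,t+1}. Then Y₁₂ ∘ Z₂₃ ∘ X₁₃ ∘ Z₂₃⁻¹ ∘ Y₁₂⁻¹ ξ = D ξ for every finitely supported vector ξ; that is, Y₁₂Z₂₃X₁₃Z₂₃*Y₁₂* = X₁₃(1⊗v²P⊗1). -/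

import Mathlib

/-!
STATEMENT 8: For q ∈ ℂ with 0 < |q| < 1 and ζ := q/conj(q), on ℓ²(ℤ⁶):
with Y₁₂ e_{i,j,k,l,s,t} = e_{i,j,k+i+j,l,s,t}, Z₂₃ e = ζ^{−lt} e,
X₁₃ e_{i,j,k,l,s,t} = ζ^{−j} q^{s−i+1} e_{i−1,j−1,k,l,s−1,t+1} and
D e_{i,j,k,l,s,t} = ζ^{−l} ζ^{−j} q^{s−i+1} e_{i−1,j−1,k−2,l,s−1,t+1},
one has Y₁₂ ∘ Z₂₃ ∘ X₁₃ ∘ Z₂₃⁻¹ ∘ Y₁₂⁻¹ ξ = D ξ for every finitely supported ξ;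
that is Y₁₂Z₂₃X₁₃Z₂₃*Y₁₂* = X₁₃(1⊗v²P⊗1).
-/

noncomputable section

/-- The Hilbert space ℓ²(ℤ⁶). -/
abbrev H : Type := lp (fun _ : ℤ × ℤ × ℤ × ℤ × ℤ × ℤ => ℂ) 2

/-- The dense subspace of finitely supported vectors in ℓ²(ℤ⁶). -/
abbrev F : Type := (ℤ × ℤ × ℤ × ℤ × ℤ × ℤ) →₀ ℂ

/-- The standard orthonormal basis vector of ℓ²(ℤ⁶). -/
noncomputable def e (i j k l s t : ℤ) : H := lp.single 2 (i, j, k, l, s, t) 1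

/-- The standard basis vector of the finitely supported subspace. -/
noncomputable def δ (i j k l s t : ℤ) : F := Finsupp.single (i, j, k, l, s, t) 1

theorem Y12_Z23_conjugate_of_X13
    (q : ℂ) (hq0 : 0 < ‖q‖) (hq1 : ‖q‖ < 1)
    (ζ : ℂ) (hζ : ζ = q / (starRingEnd ℂ) q)
    -- the unitaries Y₁₂ and Z₂₃ on ℓ²(ℤ⁶)
    (Y12 Z23 : H ≃ₗᵢ[ℂ] H)
    (hY12 : ∀ i j k l s t : ℤ, Y12 (e i j k l s t) = e i j (k + i + j) l s t)
    (hZ23 : ∀ i j k l s t : ℤ, Z23 (e i j k l s t) = ζ ^ (-(l * t)) • e i j k l s t)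
    -- their restrictions to finitely supported vectors
    (Y12f Z23f : F ≃ₗ[ℂ] F)
    (hY12f : ∀ i j k l s t : ℤ, Y12f (δ i j k l s t) = δ i j (k + i + j) l s t)
    (hZ23f : ∀ i j k l s t : ℤ, Z23f (δ i j k l s t) = ζ ^ (-(l * t)) • δ i j k l s t)
    -- the operators X₁₃ and D = X₁₃(1⊗v²P⊗1) on finitely supported vectors
    (X13 D : F →ₗ[ℂ] H)
    (hX13 : ∀ i j k l s t : ℤ, X13 (δ i j k l s t)
      = (ζ ^ (-j) * q ^ (s - i + 1)) • e (i - 1) (j - 1) k l (s - 1) (t + 1))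
    (hD : ∀ i j k l s t : ℤ, D (δ i j k l s t)
      = (ζ ^ (-l) * ζ ^ (-j) * q ^ (s - i + 1)) • e (i - 1) (j - 1) (k - 2) l (s - 1) (t + 1)) :
    ∀ ξ : F, Y12 (Z23 (X13 (Z23f.symm (Y12f.symm ξ)))) = D ξ := by
  have hq : q ≠ 0 := by
    intro h; simp [h] at hq0
  have hζ0 : ζ ≠ 0 := by
    rw [hζ]
    exact div_ne_zero hq (by simpa using hq)
  have key : ∀ i j k l s t : ℤ,
      Y12 (Z23 (X13 (Z23f.symm (Y12f.symm (δ i j k l s t))))) = D (δ i j k l s t) := by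
    intro i j k l s t
    have hY : Y12f.symm (δ i j k l s t) = δ i j (k - i - j) l s t := by
      rw [LinearEquiv.symm_apply_eq, hY12f]
      congr 2
      ring
    have hZ : Z23f.symm (δ i j (k - i - j) l s t)
        = ζ ^ (l * t) • δ i j (k - i - j) l s t := by
      rw [LinearEquiv.symm_apply_eq, map_smul, hZ23f, smul_smul, ← zpow_add₀ hζ0]
      simp
    rw [hY, hZ]
    simp only [map_smul]
    rw [hX13]
    simp only [map_smul]
    rw [hZ23]
    simp only [map_smul]
    rw [hY12, hD, smul_smul, smul_smul]
    have hk : k - i - j + (i - 1) + (j - 1) = k - 2 := by ring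
    rw [hk]
    congr 1
    have h1 : ζ ^ (l * t) * ζ ^ (-(l * (t + 1))) = ζ ^ (-l) := by
      rw [← zpow_add₀ hζ0]; congr 1; ring
    calc ζ ^ (l * t) * (ζ ^ (-j) * q ^ (s - i + 1)) * ζ ^ (-(l * (t + 1)))
        = (ζ ^ (l * t) * ζ ^ (-(l * (t + 1)))) * (ζ ^ (-j) * q ^ (s - i + 1)) := by ring
      _ = ζ ^ (-l) * ζ ^ (-j) * q ^ (s - i + 1) := by rw [h1]; ring
  intro ξ
  induction ξ using Finsupp.induction_linear with
  | zero => simp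
  | add f g hf hg => simp only [map_add, hf, hg]
  | single a b =>
    obtain ⟨i, j, k, l, s, t⟩ := a
    have : (Finsupp.single (i, j, k, l, s, t) b : F) = b • δ i j k l s t := by
      simp [δ, Finsupp.smul_single]
    rw [this]
    simp only [map_smul, key]
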